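/- Let f : ℝ^d → ℝ with ∫ e^{−f} < ∞ and define for m ≥ 1 and y_{1:m} ∈ (ℝ^d)^m the joint density p(y_{1:m}) ∝ ∫ e^{−f(x)} exp(−(1/2σ²)∑_{t=1}^m ‖x − y_t‖²) dx. Then log p(y_{1:m}) = φ(ȳ_{1:m}; σ/√m) + (m/2σ²)(‖ȳ_{1:m}‖² − (1/m)∑_t ‖y_t‖²) + const, where ȳ_{1:m} = (1/m)∑_t y_t and φ(y; s) = log 𝔼_{x~N(y, s²I)}[e^{−f(x)}]. Consequently the Bayes estimator satisfies 𝔼[X | y_{1:m}] = ȳ_{1:m} + (σ²/m)∇φ(ȳ_{1:m}; σ/√m). -/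

import Mathlib

open MeasureTheory Real

noncomputable section

def sqDist {d : ℕ} (x y : Fin d → ℝ) : ℝ := ∑ i, (x i - y i) ^ 2

/-- Density of the isotropic Gaussian `N(y, s² I)` evaluated at `x`. -/
def gKer (d : ℕ) (s : ℝ) (y x : Fin d → ℝ) : ℝ :=
  (2 * π * s ^ 2) ^ (-(d : ℝ) / 2) * Real.exp (-sqDist x y / (2 * s ^ 2))

def grad' {d : ℕ} (g : (Fin d → ℝ) → ℝ) (y : Fin d → ℝ) (i : Fin d) : ℝ :=
  fderiv ℝ g y (Pi.single i 1)

/-- `φ(y; s) = log 𝔼_{x ~ N(y, s²I)}[e^{−f(x)}]`. -/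
def φfun (d : ℕ) (f : (Fin d → ℝ) → ℝ) (s : ℝ) (y : Fin d → ℝ) : ℝ :=
  Real.log (∫ x, gKer d s y x * Real.exp (-f x))

/-- The unnormalized `(σ, m)`-density `∫ e^{−f(x)} exp(−(1/2σ²)∑_t ‖x − y_t‖²) dx`. -/
def smDens (d : ℕ) (f : (Fin d → ℝ) → ℝ) (σ : ℝ) (m : ℕ)
    (y : Fin m → Fin d → ℝ) : ℝ :=
  ∫ x, Real.exp (-f x) * Real.exp (-(1 / (2 * σ ^ 2)) * ∑ t, sqDist x (y t))

/-- The empirical mean of the `m` measurements. -/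
def ybar {d : ℕ} (m : ℕ) (y : Fin m → Fin d → ℝ) : Fin d → ℝ :=
  (m : ℝ)⁻¹ • ∑ t, y t

lemma ybar_apply {d m : ℕ} (y : Fin m → Fin d → ℝ) (i : Fin d) :
    ybar m y i = (m : ℝ)⁻¹ * ∑ t, y t i := by
  simp [ybar, Finset.sum_apply]

lemma sum_sq_aux {m : ℕ} (hm : (m:ℝ) ≠ 0) (a : Fin m → ℝ) (b : ℝ) :
    ∑ t, (b - a t)^2
      = m * (b - (m:ℝ)⁻¹ * ∑ t, a t)^2 + ((∑ t, (a t)^2) - m * ((m:ℝ)⁻¹ * ∑ t, a t)^2) := by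
  have h1 : ∑ t, (b - a t)^2 = m * b^2 - 2*b*(∑ t, a t) + ∑ t, (a t)^2 := by
    have : ∀ t ∈ Finset.univ, (b - a t)^2 = b^2 - 2*b*a t + (a t)^2 := fun t _ => by ring
    rw [Finset.sum_congr rfl this]
    simp [Finset.sum_add_distrib, Finset.sum_sub_distrib, ← Finset.mul_sum, Finset.card_univ]
  rw [h1]; field_simp; ring

lemma decomp {d m : ℕ} (hm : (m:ℝ) ≠ 0) (y : Fin m → Fin d → ℝ) (x : Fin d → ℝ) :
    ∑ t, sqDist x (y t)
      = m * sqDist x (ybar m y) + ((∑ t, ∑ i, (y t i)^2) - m * ∑ i, (ybar m y i)^2) := by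
  simp only [sqDist]
  rw [Finset.sum_comm]
  calc ∑ i, ∑ t, (x i - y t i)^2
      = ∑ i, ((m:ℝ) * (x i - ybar m y i)^2 + ((∑ t, (y t i)^2) - m * (ybar m y i)^2)) := by
        refine Finset.sum_congr rfl fun i _ => ?_
        rw [sum_sq_aux hm (fun t => y t i) (x i), ybar_apply]
    _ = _ := by
        rw [Finset.sum_add_distrib, Finset.sum_sub_distrib, ← Finset.mul_sum, ← Finset.mul_sum,
          Finset.sum_comm]

lemma aux_texp {s : ℝ} (hs : 0 < s) (t : ℝ) (ht : 0 ≤ t) :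
    t * Real.exp (-t^2 / (2*s^2)) ≤ max 1 (2*s^2) := by
  rcases le_total t 1 with h | h
  · have h1 : Real.exp (-t^2/(2*s^2)) ≤ 1 := by
      rw [Real.exp_le_one_iff, neg_div]
      have : 0 ≤ t^2/(2*s^2) := by positivity
      linarith
    calc t * Real.exp (-t^2/(2*s^2)) ≤ 1 := mul_le_one₀ h (Real.exp_nonneg _) h1
      _ ≤ max 1 (2*s^2) := le_max_left _ _
  · have ht0 : 0 < t := lt_of_lt_of_le one_pos h
    have hu : 0 < t^2/(2*s^2) := by positivity
    have h2 : t^2/(2*s^2) ≤ Real.exp (t^2/(2*s^2)) := by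
      have := Real.add_one_le_exp (t^2/(2*s^2)); linarith
    have h3 : Real.exp (-t^2/(2*s^2)) ≤ (t^2/(2*s^2))⁻¹ := by
      rw [neg_div, Real.exp_neg]
      exact inv_anti₀ hu h2
    have h4 : t * Real.exp (-t^2/(2*s^2)) ≤ t * (t^2/(2*s^2))⁻¹ :=
      mul_le_mul_of_nonneg_left h3 ht
    have h5 : t * (t^2/(2*s^2))⁻¹ = 2*s^2/t := by
      field_simp
    calc t * Real.exp (-t^2/(2*s^2)) ≤ 2*s^2/t := by rw [← h5]; exact h4
      _ ≤ 2*s^2 := div_le_self (by positivity) h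
      _ ≤ max 1 (2*s^2) := le_max_right _ _

lemma sqDist_nonneg {d : ℕ} (x z : Fin d → ℝ) : 0 ≤ sqDist x z :=
  Finset.sum_nonneg fun i _ => sq_nonneg _

lemma abs_le_sqrt_sqDist {d : ℕ} (x z : Fin d → ℝ) (i : Fin d) :
    |x i - z i| ≤ Real.sqrt (sqDist x z) := by
  rw [← Real.sqrt_sq_eq_abs]
  have h : (x i - z i)^2 ≤ sqDist x z :=
    Finset.single_le_sum (f := fun j => (x j - z j)^2) (fun j _ => sq_nonneg _) (Finset.mem_univ i)
  exact Real.sqrt_le_sqrt h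

lemma gker_nonneg {d : ℕ} {s : ℝ} (z x : Fin d → ℝ) : 0 ≤ gKer d s z x := by
  unfold gKer; positivity

lemma gker_le {d : ℕ} {s : ℝ} (hs : 0 < s) (z x : Fin d → ℝ) :
    gKer d s z x ≤ (2 * π * s ^ 2) ^ (-(d:ℝ)/2) := by
  unfold gKer
  have h1 : Real.exp (-sqDist x z / (2 * s ^ 2)) ≤ 1 := by
    rw [Real.exp_le_one_iff, neg_div]
    have h2 : 0 ≤ sqDist x z / (2*s^2) := by
      have := sqDist_nonneg x z; positivity
    linarith
  nlinarith [Real.rpow_pos_of_pos (by positivity : (0:ℝ) < 2*π*s^2) (-(d:ℝ)/2),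
    Real.exp_nonneg (-sqDist x z / (2 * s ^ 2))]

lemma gker_sqrt_le {d : ℕ} {s : ℝ} (hs : 0 < s) (z x : Fin d → ℝ) :
    Real.sqrt (sqDist x z) * gKer d s z x
      ≤ (2 * π * s ^ 2) ^ (-(d:ℝ)/2) * max 1 (2*s^2) := by
  unfold gKer
  have h0 : 0 ≤ sqDist x z := sqDist_nonneg x z
  have h1 : Real.sqrt (sqDist x z) * Real.exp (-sqDist x z / (2*s^2)) ≤ max 1 (2*s^2) := by
    have := aux_texp hs (Real.sqrt (sqDist x z)) (Real.sqrt_nonneg _)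
    rwa [Real.sq_sqrt h0] at this
  have hC : (0:ℝ) < (2 * π * s ^ 2) ^ (-(d:ℝ)/2) :=
    Real.rpow_pos_of_pos (by positivity) _
  calc Real.sqrt (sqDist x z) * ((2 * π * s ^ 2) ^ (-(d:ℝ)/2) * Real.exp (-sqDist x z / (2 * s ^ 2)))
      = (2 * π * s ^ 2) ^ (-(d:ℝ)/2) * (Real.sqrt (sqDist x z) * Real.exp (-sqDist x z / (2 * s ^ 2))) := by ring
    _ ≤ _ := mul_le_mul_of_nonneg_left h1 hC.le

lemma continuous_gker {d : ℕ} (s : ℝ) (z : Fin d → ℝ) :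
    Continuous fun x => gKer d s z x := by
  unfold gKer sqDist
  fun_prop

lemma Lnorm_le {d : ℕ} (c : Fin d → ℝ) :
    ‖∑ i, c i • (ContinuousLinearMap.proj (R := ℝ) (φ := fun _ : Fin d => ℝ) i)‖
      ≤ ∑ i, |c i| := by
  refine ContinuousLinearMap.opNorm_le_bound _ (by positivity) fun v => ?_
  simp only [ContinuousLinearMap.coe_sum', Finset.sum_apply, ContinuousLinearMap.coe_smul',
    Pi.smul_apply, ContinuousLinearMap.proj_apply]
  calc ‖∑ i, c i • v i‖ ≤ ∑ i, ‖c i • v i‖ := norm_sum_le _ _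
    _ ≤ ∑ i, |c i| * ‖v‖ := Finset.sum_le_sum fun i _ => by
        rw [norm_smul, Real.norm_eq_abs]
        exact mul_le_mul_of_nonneg_left (norm_le_pi_norm v i) (abs_nonneg _)
    _ = (∑ i, |c i|) * ‖v‖ := (Finset.sum_mul _ _ _).symm

abbrev projR (d : ℕ) (i : Fin d) : (Fin d → ℝ) →L[ℝ] ℝ :=
  ContinuousLinearMap.proj (R := ℝ) (φ := fun _ : Fin d => ℝ) i

lemma hasfderiv_q {d : ℕ} {s : ℝ} (hs : 0 < s) (x z : Fin d → ℝ) :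
    HasFDerivAt (fun z : Fin d → ℝ => -sqDist x z / (2 * s^2))
      ((s^2)⁻¹ • ∑ i, (x i - z i) • projR d i) z := by
  have h : ∀ i : Fin d, HasFDerivAt (fun z : Fin d → ℝ => -((x i - z i)^2 * (2*s^2)⁻¹))
      (((s^2)⁻¹ * (x i - z i)) • projR d i) z := by
    intro i
    have h1 : HasFDerivAt (fun z : Fin d → ℝ => x i - z i) (-projR d i) z :=
      (hasFDerivAt_apply i z).const_sub (x i)
    have h1sq : HasFDerivAt (fun z : Fin d → ℝ => (x i - z i)^2)
        ((x i - z i) • (-projR d i) + (x i - z i) • (-projR d i)) z := by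
      simpa [pow_two] using h1.fun_mul h1
    have h2 := (h1sq.mul_const ((2*s^2)⁻¹)).fun_neg
    convert! h2 using 1
    ext v
    simp only [ContinuousLinearMap.coe_smul', Pi.smul_apply, ContinuousLinearMap.proj_apply,
      ContinuousLinearMap.neg_apply, ContinuousLinearMap.add_apply, smul_eq_mul,
      ContinuousLinearMap.smul_apply, Pi.neg_apply]
    ring
  have hsum := HasFDerivAt.fun_sum (fun i (_ : i ∈ Finset.univ) => h i)
  convert! hsum using 1
  · funext w
    simp [sqDist, neg_div, Finset.sum_div, div_eq_mul_inv, Finset.sum_mul]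
  · rw [Finset.smul_sum]
    exact Finset.sum_congr rfl fun i _ => smul_smul _ _ _

lemma hasfderiv_gker {d : ℕ} {s : ℝ} (hs : 0 < s) (x z : Fin d → ℝ) (c : ℝ) :
    HasFDerivAt (fun z => gKer d s z x * c)
      (((s^2)⁻¹ * (gKer d s z x * c)) • ∑ i, (x i - z i) • projR d i) z := by
  have hq := hasfderiv_q hs x z
  have h3 := (hq.exp.const_mul ((2 * π * s ^ 2) ^ (-(d:ℝ)/2))).mul_const c
  convert! h3 using 1
  ext v
  simp only [gKer, ContinuousLinearMap.coe_smul', Pi.smul_apply, smul_eq_mul,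
    ContinuousLinearMap.smul_apply]
  ring

lemma integrable_gker {d : ℕ} {s : ℝ} (hs : 0 < s) {f : (Fin d → ℝ) → ℝ}
    (hfi : Integrable fun x => Real.exp (-f x)) (z : Fin d → ℝ) :
    Integrable fun x => gKer d s z x * Real.exp (-f x) := by
  refine (hfi.const_mul ((2*π*s^2) ^ (-(d:ℝ)/2))).mono'
    ((continuous_gker s z).aestronglyMeasurable.mul hfi.aestronglyMeasurable)
    (ae_of_all _ fun x => ?_)
  rw [Real.norm_eq_abs, abs_of_nonneg (mul_nonneg (gker_nonneg z x) (Real.exp_nonneg _))]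
  exact mul_le_mul_of_nonneg_right (gker_le hs z x) (Real.exp_nonneg _)

lemma Ipos {d : ℕ} {s : ℝ} (hs : 0 < s) {f : (Fin d → ℝ) → ℝ}
    (hfi : Integrable fun x => Real.exp (-f x)) (z : Fin d → ℝ) :
    0 < ∫ x, gKer d s z x * Real.exp (-f x) := by
  have hint := integrable_gker hs hfi z
  have hpos : ∀ x, 0 < gKer d s z x * Real.exp (-f x) := fun x =>
    mul_pos (by unfold gKer; positivity) (Real.exp_pos _)
  rw [integral_pos_iff_support_of_nonneg (fun x => (hpos x).le) hint]
  have hsup : Function.support (fun x => gKer d s z x * Real.exp (-f x)) = Set.univ :=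
    Set.eq_univ_iff_forall.2 fun x => (hpos x).ne'
  rw [hsup]
  exact isOpen_univ.measure_pos volume ⟨0, trivial⟩

lemma hasfderiv_I {d : ℕ} {s : ℝ} (hs : 0 < s) {f : (Fin d → ℝ) → ℝ}
    (hfi : Integrable fun x => Real.exp (-f x)) (z₀ : Fin d → ℝ) :
    Integrable (fun x => ((s^2)⁻¹ * (gKer d s z₀ x * Real.exp (-f x))) •
        ∑ i, (x i - z₀ i) • projR d i)
      ∧ HasFDerivAt (fun z => ∫ x, gKer d s z x * Real.exp (-f x))
        (∫ x, ((s^2)⁻¹ * (gKer d s z₀ x * Real.exp (-f x))) •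
          ∑ i, (x i - z₀ i) • projR d i) z₀ := by
  set e : (Fin d → ℝ) → ℝ := fun x => Real.exp (-f x) with he_def
  set C2 : ℝ := (2*π*s^2) ^ (-(d:ℝ)/2) with hC2
  set F' : (Fin d → ℝ) → (Fin d → ℝ) → ((Fin d → ℝ) →L[ℝ] ℝ) :=
    fun z x => ((s^2)⁻¹ * (gKer d s z x * e x)) • ∑ i, (x i - z i) • projR d i with hF'
  set bound : (Fin d → ℝ) → ℝ := fun x => ((s^2)⁻¹ * ((d:ℝ) * (C2 * max 1 (2*s^2)))) * e x
    with hbound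
  have h0e : ∀ x, 0 ≤ e x := fun x => Real.exp_nonneg _
  have hnorm : ∀ z x, ‖F' z x‖ ≤ bound x := by
    intro z x
    have hL : ‖∑ i, (x i - z i) • projR d i‖ ≤ ∑ i, |x i - z i| := Lnorm_le _
    have hsum : ∑ i, |x i - z i| ≤ d * Real.sqrt (sqDist x z) :=
      calc ∑ i, |x i - z i| ≤ ∑ _i : Fin d, Real.sqrt (sqDist x z) :=
            Finset.sum_le_sum fun i _ => abs_le_sqrt_sqDist x z i
        _ = d * Real.sqrt (sqDist x z) := by simp [Finset.sum_const, nsmul_eq_mul]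
    have hgs := gker_sqrt_le hs z x
    have h1 : 0 ≤ gKer d s z x := gker_nonneg z x
    have hnn : 0 ≤ (s^2)⁻¹ * (gKer d s z x * e x) := by positivity
    simp only [hF', hbound]
    refine le_trans (ContinuousLinearMap.opNorm_smul_le _ _) ?_
    rw [Real.norm_eq_abs, abs_of_nonneg hnn]
    calc ((s^2)⁻¹ * (gKer d s z x * e x)) * ‖∑ i, (x i - z i) • projR d i‖
        ≤ ((s^2)⁻¹ * (gKer d s z x * e x)) * ((d:ℝ) * Real.sqrt (sqDist x z)) :=
          mul_le_mul_of_nonneg_left (hL.trans hsum) hnn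
      _ = (s^2)⁻¹ * (d:ℝ) * (Real.sqrt (sqDist x z) * gKer d s z x) * e x := by ring
      _ ≤ (s^2)⁻¹ * (d:ℝ) * (C2 * max 1 (2*s^2)) * e x := by
          exact mul_le_mul_of_nonneg_right
            (mul_le_mul_of_nonneg_left hgs (by positivity)) (h0e x)
      _ = (s^2)⁻¹ * ((d:ℝ) * (C2 * max 1 (2*s^2))) * e x := by ring
  have he_m := hfi.aestronglyMeasurable
  have hLc : Continuous fun x : Fin d → ℝ => ∑ i, (x i - z₀ i) • projR d i :=
    continuous_finset_sum _ fun i _ =>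
      (Continuous.smul ((continuous_apply i).sub continuous_const) continuous_const)
  have hF'meas : AEStronglyMeasurable (F' z₀) volume := by
    exact ((((continuous_gker s z₀).aestronglyMeasurable.mul he_m).const_mul
      ((s^2)⁻¹)).smul hLc.aestronglyMeasurable)
  have hboundint : Integrable bound := hfi.const_mul _
  have hF'int : Integrable (F' z₀) :=
    hboundint.mono' hF'meas (ae_of_all _ fun x => hnorm z₀ x)
  have hder := hasFDerivAt_integral_of_dominated_of_fderiv_le
    (F := fun z x => gKer d s z x * e x) (F' := F') (bound := bound)
    Filter.univ_mem
    (Filter.Eventually.of_forall fun z => (continuous_gker s z).aestronglyMeasurable.mul he_m)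
    (integrable_gker hs hfi z₀) hF'meas
    (ae_of_all _ fun x z _ => hnorm z x) hboundint
    (ae_of_all _ fun x z _ => hasfderiv_gker hs x z (e x))
  exact ⟨hF'int, hder⟩

/-- Decomposition `log p(y_{1:m}) = φ(ȳ; σ/√m) + (m/2σ²)(‖ȳ‖² − (1/m)∑‖y_t‖²) + const`,
and the Bayes estimator `𝔼[X|y_{1:m}] = ȳ + (σ²/m)∇φ(ȳ; σ/√m)`. -/
theorem stmt19 (d m : ℕ) (hm : 0 < m) (σ : ℝ) (hσ : 0 < σ)
    (f : (Fin d → ℝ) → ℝ) (hfi : Integrable fun x => Real.exp (-f x)) :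
    (∃ c : ℝ, ∀ y : Fin m → Fin d → ℝ,
        Real.log (smDens d f σ m y)
          = φfun d f (σ / Real.sqrt m) (ybar m y)
            + ((m : ℝ) / (2 * σ ^ 2))
                * ((∑ i, ybar m y i ^ 2) - (m : ℝ)⁻¹ * ∑ t, ∑ i, y t i ^ 2)
            + c)
    ∧ ∀ (y : Fin m → Fin d → ℝ) (i : Fin d),
        (∫ x, x i * (Real.exp (-f x)
              * Real.exp (-(1 / (2 * σ ^ 2)) * ∑ t, sqDist x (y t))))
            / smDens d f σ m y
          = ybar m y i
            + (σ ^ 2 / m) * grad' (φfun d f (σ / Real.sqrt m)) (ybar m y) i := by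
  have hm0 : (m:ℝ) ≠ 0 := Nat.cast_ne_zero.mpr hm.ne'
  have hσ0 : σ ≠ 0 := hσ.ne'
  set s : ℝ := σ / Real.sqrt m with hs_def
  have hs : 0 < s := div_pos hσ (Real.sqrt_pos.mpr (by exact_mod_cast hm))
  have hs2 : s ^ 2 = σ ^ 2 / m := by
    rw [hs_def, div_pow, Real.sq_sqrt (Nat.cast_nonneg m)]
  set C2 : ℝ := (2*π*s^2) ^ (-(d:ℝ)/2) with hC2
  have hC2pos : 0 < C2 := Real.rpow_pos_of_pos (by positivity) _
  set E : (Fin m → Fin d → ℝ) → ℝ :=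
    fun y => ((m:ℝ)/(2*σ^2)) * ((∑ i, ybar m y i ^ 2) - (m:ℝ)⁻¹ * ∑ t, ∑ i, y t i ^ 2)
    with hE
  have hfac : ∀ (y : Fin m → Fin d → ℝ) (x : Fin d → ℝ),
      Real.exp (-f x) * Real.exp (-(1 / (2 * σ ^ 2)) * ∑ t, sqDist x (y t))
        = (C2⁻¹ * Real.exp (E y)) * (gKer d s (ybar m y) x * Real.exp (-f x)) := by
    intro y x
    have hkey : -(1 / (2 * σ ^ 2)) * ∑ t, sqDist x (y t)
        = E y + (-sqDist x (ybar m y) / (2 * s ^ 2)) := by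
      rw [decomp hm0 y x, hE, hs2]
      have hsq : ∀ w : Fin d → ℝ, sqDist x w = ∑ i, (x i - w i)^2 := fun w => rfl
      field_simp
      ring
    have hg : gKer d s (ybar m y) x
        = C2 * Real.exp (-sqDist x (ybar m y) / (2 * s ^ 2)) := rfl
    rw [hg, hkey, Real.exp_add]
    field_simp
  have hsm : ∀ y : Fin m → Fin d → ℝ, smDens d f σ m y
      = (C2⁻¹ * Real.exp (E y)) * ∫ x, gKer d s (ybar m y) x * Real.exp (-f x) := by
    intro y
    rw [smDens]
    simp_rw [hfac y]
    exact integral_const_mul _ _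
  have hI : ∀ z : Fin d → ℝ, 0 < ∫ x, gKer d s z x * Real.exp (-f x) := Ipos hs hfi
  constructor
  · refine ⟨-Real.log C2, fun y => ?_⟩
    show Real.log (smDens d f σ m y) = φfun d f s (ybar m y) + E y + -Real.log C2
    rw [hsm y, Real.log_mul (mul_pos (inv_pos.mpr hC2pos) (Real.exp_pos _)).ne' (hI _).ne',
      Real.log_mul (inv_pos.mpr hC2pos).ne' (Real.exp_ne_zero _), Real.log_inv, Real.log_exp,
      φfun]
    ring
  · intro y i
    obtain ⟨hF'int, hder⟩ := hasfderiv_I hs hfi (ybar m y)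
    have hlog : HasFDerivAt (φfun d f s)
        ((∫ x, gKer d s (ybar m y) x * Real.exp (-f x))⁻¹ •
          ∫ x, ((s^2)⁻¹ * (gKer d s (ybar m y) x * Real.exp (-f x))) •
            ∑ j, (x j - ybar m y j) • projR d j) (ybar m y) := by
      have hφ : φfun d f s = fun z => Real.log (∫ x, gKer d s z x * Real.exp (-f x)) := rfl
      rw [hφ]
      exact hder.log (hI _).ne'
    have hev : ∀ x : Fin d → ℝ,
        (((s^2)⁻¹ * (gKer d s (ybar m y) x * Real.exp (-f x))) •
          ∑ j, (x j - ybar m y j) • projR d j) (Pi.single i 1)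
        = (s^2)⁻¹ * ((x i - ybar m y i) * (gKer d s (ybar m y) x * Real.exp (-f x))) := by
      intro x
      rw [ContinuousLinearMap.smul_apply, ContinuousLinearMap.sum_apply]
      have : ∑ j, ((x j - ybar m y j) • projR d j) (Pi.single i 1) = x i - ybar m y i := by
        simp [Pi.single_apply, Finset.sum_ite_eq', mul_ite]
      rw [this, smul_eq_mul]
      ring
    have hgrad : grad' (φfun d f s) (ybar m y) i
        = (∫ x, gKer d s (ybar m y) x * Real.exp (-f x))⁻¹ *
            ((s^2)⁻¹ * ∫ x, (x i - ybar m y i) * (gKer d s (ybar m y) x * Real.exp (-f x))) := by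
      rw [grad', hlog.fderiv, ContinuousLinearMap.smul_apply,
        ContinuousLinearMap.integral_apply hF'int, smul_eq_mul]
      congr 1
      simp_rw [hev]
      exact integral_const_mul _ _
    have hintP := integrable_gker hs hfi (ybar m y)
    have hintJ : Integrable fun x =>
        (x i - ybar m y i) * (gKer d s (ybar m y) x * Real.exp (-f x)) := by
      refine (hfi.const_mul (C2 * max 1 (2*s^2))).mono'
        ((((continuous_apply i).sub continuous_const).aestronglyMeasurable).mul
          ((continuous_gker s (ybar m y)).aestronglyMeasurable.mul hfi.aestronglyMeasurable))
        (ae_of_all _ fun x => ?_)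
      have h1 : |x i - ybar m y i| ≤ Real.sqrt (sqDist x (ybar m y)) :=
        abs_le_sqrt_sqDist x (ybar m y) i
      have h2 := gker_sqrt_le (d := d) hs (ybar m y) x
      have h3 : 0 ≤ Real.exp (-f x) := Real.exp_nonneg _
      rw [Real.norm_eq_abs, abs_mul, abs_of_nonneg
        (mul_nonneg (gker_nonneg _ _) h3)]
      calc |x i - ybar m y i| * (gKer d s (ybar m y) x * Real.exp (-f x))
          ≤ Real.sqrt (sqDist x (ybar m y)) * (gKer d s (ybar m y) x * Real.exp (-f x)) :=
            mul_le_mul_of_nonneg_right h1 (mul_nonneg (gker_nonneg _ _) h3)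
        _ = (Real.sqrt (sqDist x (ybar m y)) * gKer d s (ybar m y) x) * Real.exp (-f x) := by
            ring
        _ ≤ (C2 * max 1 (2*s^2)) * Real.exp (-f x) := by
            exact mul_le_mul_of_nonneg_right (by rw [hC2]; exact h2) h3
    have hnum : (∫ x, x i * (Real.exp (-f x)
          * Real.exp (-(1 / (2 * σ ^ 2)) * ∑ t, sqDist x (y t))))
        = (C2⁻¹ * Real.exp (E y)) *
            ∫ x, x i * (gKer d s (ybar m y) x * Real.exp (-f x)) := by
      simp_rw [hfac y]
      have h4 : ∀ x : Fin d → ℝ, x i * ((C2⁻¹ * Real.exp (E y)) *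
            (gKer d s (ybar m y) x * Real.exp (-f x)))
          = (C2⁻¹ * Real.exp (E y)) * (x i * (gKer d s (ybar m y) x * Real.exp (-f x))) :=
        fun x => by ring
      simp_rw [h4]
      exact integral_const_mul _ _
    have hsplit : (∫ x, x i * (gKer d s (ybar m y) x * Real.exp (-f x)))
        = (∫ x, (x i - ybar m y i) * (gKer d s (ybar m y) x * Real.exp (-f x)))
          + ybar m y i * ∫ x, gKer d s (ybar m y) x * Real.exp (-f x) := by
      have h5 : ∀ x : Fin d → ℝ, x i * (gKer d s (ybar m y) x * Real.exp (-f x))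
          = (x i - ybar m y i) * (gKer d s (ybar m y) x * Real.exp (-f x))
            + ybar m y i * (gKer d s (ybar m y) x * Real.exp (-f x)) := fun x => by ring
      simp_rw [h5]
      rw [integral_add hintJ (hintP.const_mul _), integral_const_mul]
    rw [hnum, hsm y, mul_div_mul_left _ _
      (mul_pos (inv_pos.mpr hC2pos) (Real.exp_pos _)).ne', hsplit, hgrad, ← hs2]
    field_simp [(hI (ybar m y)).ne', hs.ne']
    ring

end
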